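/- Let φ and ψ be finite potent endomorphisms of a k-vector space V such that (1+φ)∘(1+ψ) = id_V = (1+ψ)∘(1+φ). Let A ⊆ End_k(V) be the unital k-subalgebra generated by φ and ψ, and let F = φ∘A + ψ∘A. Then F is a finite potent subspace of End_k(V). -/

import Mathlib

/-- A subspace `F ⊆ End_k(V)` is a *finite potent subspace* if there is `n ≥ 1` such that
any composition of `n` elements of `F` has finite-dimensional image. -/
def IsFinitePotentSubspace {k V : Type*} [Field k] [AddCommGroup V] [Module k V]
    (F : Submodule k (V →ₗ[k] V)) : Prop :=
  ∃ n : ℕ, 1 ≤ n ∧ ∀ f : Fin n → (V →ₗ[k] V), (∀ i, f i ∈ F) →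
    FiniteDimensional k (LinearMap.range (List.ofFn f).prod)

lemma aux_rearrange_left {R : Type*} [Ring R] {φ ψ c : R} (h1 : Commute φ c)
    (h2 : Commute ψ c) (a b : ℕ) (d : R) :
    (φ * c) * (φ ^ a * ψ ^ b * d) = φ ^ (a + 1) * ψ ^ b * (c * d) := by
  have e1 : c * φ ^ a = φ ^ a * c := ((h1.pow_left a).eq).symm
  have e2 : c * ψ ^ b = ψ ^ b * c := ((h2.pow_left b).eq).symm
  calc (φ * c) * (φ ^ a * ψ ^ b * d)
      = φ * ((c * φ ^ a) * (ψ ^ b * d)) := by simp only [mul_assoc]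
    _ = φ * ((φ ^ a * c) * (ψ ^ b * d)) := by rw [e1]
    _ = φ * (φ ^ a * ((c * ψ ^ b) * d)) := by simp only [mul_assoc]
    _ = φ * (φ ^ a * ((ψ ^ b * c) * d)) := by rw [e2]
    _ = (φ * φ ^ a) * ψ ^ b * (c * d) := by simp only [mul_assoc]
    _ = φ ^ (a + 1) * ψ ^ b * (c * d) := by rw [pow_succ']

lemma aux_rearrange_right {R : Type*} [Ring R] {φ ψ c : R} (h1 : Commute φ c)
    (h2 : Commute ψ c) (h3 : Commute φ ψ) (a b : ℕ) (d : R) :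
    (ψ * c) * (φ ^ a * ψ ^ b * d) = φ ^ a * ψ ^ (b + 1) * (c * d) := by
  have e1 : c * φ ^ a = φ ^ a * c := ((h1.pow_left a).eq).symm
  have e3 : ψ * φ ^ a = φ ^ a * ψ := ((h3.pow_left a).eq).symm
  have e2 : c * ψ ^ b = ψ ^ b * c := ((h2.pow_left b).eq).symm
  calc (ψ * c) * (φ ^ a * ψ ^ b * d)
      = ψ * ((c * φ ^ a) * (ψ ^ b * d)) := by simp only [mul_assoc]
    _ = (ψ * φ ^ a) * (c * ψ ^ b * d) := by rw [e1]; simp only [mul_assoc]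
    _ = (φ ^ a * ψ) * (ψ ^ b * c * d) := by rw [e3, e2]
    _ = φ ^ a * ((ψ * ψ ^ b) * (c * d)) := by simp only [mul_assoc]
    _ = φ ^ a * ψ ^ (b + 1) * (c * d) := by rw [pow_succ']; simp only [mul_assoc]

/-- if `φ`, `ψ` are finite potent with `(1+φ)(1+ψ) = 1 = (1+ψ)(1+φ)`, and `A` is the
unital subalgebra of `End_k(V)` generated by `φ` and `ψ`, then `F = φ∘A + ψ∘A` is a
finite potent subspace of `End_k(V)`. -/
theorem isFinitePotentSubspace_of_inverse
    {k V : Type*} [Field k] [AddCommGroup V] [Module k V]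
    (φ ψ : V →ₗ[k] V)
    (hφ : ∃ n : ℕ, 1 ≤ n ∧ FiniteDimensional k (LinearMap.range (φ ^ n)))
    (hψ : ∃ n : ℕ, 1 ≤ n ∧ FiniteDimensional k (LinearMap.range (ψ ^ n)))
    (hinv : (1 + φ) * (1 + ψ) = 1 ∧ (1 + ψ) * (1 + φ) = 1)
    (A : Subalgebra k (V →ₗ[k] V)) (hA : A = Algebra.adjoin k {φ, ψ})
    (F : Submodule k (V →ₗ[k] V))
    (hF : F = Submodule.map (LinearMap.mulLeft k φ) (Subalgebra.toSubmodule A)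
            ⊔ Submodule.map (LinearMap.mulLeft k ψ) (Subalgebra.toSubmodule A)) :
    IsFinitePotentSubspace F := by
  obtain ⟨nφ, hnφ, hfφ⟩ := hφ
  obtain ⟨nψ, hnψ, hfψ⟩ := hψ
  -- commutativity of φ and ψ
  have hc : φ * ψ = ψ * φ := by
    have expand : ∀ x y : V →ₗ[k] V, (1 + x) * (1 + y) = (1 + x + y) + x * y := by
      intro x y; noncomm_ring
    have a' : (1 + φ + ψ) + φ * ψ = 1 := by rw [← expand]; exact hinv.1
    have b' : (1 + φ + ψ) + ψ * φ = 1 := by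
      have := hinv.2
      rw [expand] at this
      rw [show (1 : V →ₗ[k] V) + φ + ψ = 1 + ψ + φ by abel]
      exact this
    exact add_left_cancel (a'.trans b'.symm)
  have hcom : Commute φ ψ := hc
  -- elements of A commute with φ and ψ
  have hcA : ∀ x ∈ A, Commute φ x ∧ Commute ψ x := by
    intro x hx
    rw [hA] at hx
    constructor
    · refine Algebra.commute_of_mem_adjoin_of_forall_mem_commute hx ?_
      intro b hb
      simp only [Set.mem_insert_iff, Set.mem_singleton_iff] at hb
      rcases hb with h | h <;> rw [h]
      · exact Commute.refl φ
      · exact hcom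
    · refine Algebra.commute_of_mem_adjoin_of_forall_mem_commute hx ?_
      intro b hb
      simp only [Set.mem_insert_iff, Set.mem_singleton_iff] at hb
      rcases hb with h | h <;> rw [h]
      · exact hcom.symm
      · exact Commute.refl ψ
  -- the filtration of spans
  set S : ℕ → Submodule k (V →ₗ[k] V) := fun n =>
    Submodule.span k {x | ∃ a b : ℕ, a + b = n ∧ ∃ c ∈ A, x = φ ^ a * ψ ^ b * c} with hS
  -- membership of elements of F
  have hmemF : ∀ f ∈ F, ∃ a ∈ A, ∃ b ∈ A, f = φ * a + ψ * b := by
    intro f hf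
    rw [hF] at hf
    rcases Submodule.mem_sup.mp hf with ⟨x, hx, y, hy, rfl⟩
    rcases hx with ⟨a, ha, rfl⟩
    rcases hy with ⟨b, hb, rfl⟩
    exact ⟨a, ha, b, hb, rfl⟩
  -- step lemma
  have hstep : ∀ f ∈ F, ∀ n : ℕ, ∀ x ∈ S n, f * x ∈ S (n + 1) := by
    intro f hf n x hx
    obtain ⟨a, ha, b, hb, rfl⟩ := hmemF f hf
    rw [add_mul]
    refine Submodule.add_mem _ ?_ ?_
    · refine Submodule.span_induction
        (p := fun x _ => (φ * a) * x ∈ S (n + 1)) ?_ ?_ ?_ ?_ hx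
      · rintro y ⟨p, q, hpq, c, hcm, rfl⟩
        rw [aux_rearrange_left (hcA a ha).1 (hcA a ha).2 p q c]
        refine Submodule.subset_span ⟨p + 1, q, by omega, a * c, mul_mem ha hcm, rfl⟩
      · simp only [mul_zero]; exact Submodule.zero_mem (S (n + 1))
      · intro y z _ _ hy hz
        rw [mul_add]; exact Submodule.add_mem _ hy hz
      · intro r y _ hy
        rw [mul_smul_comm]; exact Submodule.smul_mem _ r hy
    · refine Submodule.span_induction
        (p := fun x _ => (ψ * b) * x ∈ S (n + 1)) ?_ ?_ ?_ ?_ hx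
      · rintro y ⟨p, q, hpq, c, hcm, rfl⟩
        rw [aux_rearrange_right (hcA b hb).1 (hcA b hb).2 hcom p q c]
        refine Submodule.subset_span ⟨p, q + 1, by omega, b * c, mul_mem hb hcm, rfl⟩
      · simp only [mul_zero]; exact Submodule.zero_mem (S (n + 1))
      · intro y z _ _ hy hz
        rw [mul_add]; exact Submodule.add_mem _ hy hz
      · intro r y _ hy
        rw [mul_smul_comm]; exact Submodule.smul_mem _ r hy
  -- list lemma
  have hlist : ∀ l : List (V →ₗ[k] V), (∀ x ∈ l, x ∈ F) → l.prod ∈ S l.length := by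
    intro l
    induction l with
    | nil =>
      intro _
      refine Submodule.subset_span ⟨0, 0, rfl, 1, one_mem A, by simp⟩
    | cons f l ih =>
      intro h
      rw [List.prod_cons, List.length_cons]
      exact hstep f (h f (List.mem_cons_self)) _ _
        (ih fun x hx => h x (List.mem_cons_of_mem _ hx))
  -- the submodule of finite-rank operators
  have hfin_of_le : ∀ (p q : Submodule k V), FiniteDimensional k q → p ≤ q →
      FiniteDimensional k p := by
    intro p q hq hpq
    exact Submodule.finiteDimensional_of_le hpq
  set R : Submodule k (V →ₗ[k] V) :=
    { carrier := {f | FiniteDimensional k (LinearMap.range f)}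
      zero_mem' := by
        show FiniteDimensional k (LinearMap.range (0 : V →ₗ[k] V))
        rw [LinearMap.range_zero]
        infer_instance
      add_mem' := by
        intro f g hf hg
        simp only [Set.mem_setOf_eq] at hf hg ⊢
        have hle : LinearMap.range (f + g) ≤ LinearMap.range f ⊔ LinearMap.range g := by
          rintro x ⟨v, rfl⟩
          exact Submodule.add_mem_sup ⟨v, rfl⟩ ⟨v, rfl⟩
        haveI := hf; haveI := hg
        exact Submodule.finiteDimensional_of_le hle
      smul_mem' := by
        intro r f hf
        simp only [Set.mem_setOf_eq] at hf ⊢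
        have hle : LinearMap.range (r • f) ≤ LinearMap.range f := by
          rintro x ⟨v, rfl⟩
          exact ⟨r • v, by simp⟩
        haveI := hf
        exact Submodule.finiteDimensional_of_le hle } with hR
  -- generators of S (nφ + nψ) are finite rank
  have hSR : S (nφ + nψ) ≤ R := by
    rw [hS]
    refine Submodule.span_le.mpr ?_
    rintro x ⟨a, b, hab, c, hcm, rfl⟩
    show FiniteDimensional k (LinearMap.range (φ ^ a * ψ ^ b * c))
    by_cases hcase : nφ ≤ a
    · have e : φ ^ a * ψ ^ b * c = φ ^ nφ * (φ ^ (a - nφ) * (ψ ^ b * c)) := by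
        rw [← mul_assoc, ← mul_assoc, ← pow_add, Nat.add_sub_cancel' hcase]
      rw [e]
      have hle : LinearMap.range (φ ^ nφ * (φ ^ (a - nφ) * (ψ ^ b * c)))
          ≤ LinearMap.range (φ ^ nφ) := by
        rw [Module.End.mul_eq_comp]
        exact LinearMap.range_comp_le_range _ _
      exact Submodule.finiteDimensional_of_le hle
    · have hb2 : nψ ≤ b := by omega
      have e : φ ^ a * ψ ^ b * c = ψ ^ nψ * (ψ ^ (b - nψ) * (φ ^ a * c)) := by
        have hswap : φ ^ a * ψ ^ b = ψ ^ b * φ ^ a := (hcom.pow_pow a b).eq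
        rw [hswap, ← mul_assoc, ← mul_assoc, ← pow_add, Nat.add_sub_cancel' hb2]
      rw [e]
      have hle : LinearMap.range (ψ ^ nψ * (ψ ^ (b - nψ) * (φ ^ a * c)))
          ≤ LinearMap.range (ψ ^ nψ) := by
        rw [Module.End.mul_eq_comp]
        exact LinearMap.range_comp_le_range _ _
      exact Submodule.finiteDimensional_of_le hle
  refine ⟨nφ + nψ, by omega, ?_⟩
  intro f hfF
  have h1 : (List.ofFn f).prod ∈ S (nφ + nψ) := by
    have := hlist (List.ofFn f) (by
      intro x hx
      rcases (List.mem_ofFn (f := f) (a := x)).mp hx with ⟨i, rfl⟩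
      exact hfF i)
    simpa [List.length_ofFn] using this
  exact hSR h1
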